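/- Among all real random variables with density and fixed variance σ² > 0, the Gaussian with variance σ² maximizes the differential entropy: for any real random variable X with density p and Var(X) = σ², H(X) := -∫ p log p ≤ (1/2) log(2π e σ²), with equality iff X is Gaussian. -/

import Mathlib

open MeasureTheory Real

lemma gibbs_pointwise {a b : ℝ} (ha : 0 ≤ a) (hb : 0 < b) :
    a - b ≤ a * Real.log a - a * Real.log b ∧
    (a * Real.log a - a * Real.log b = a - b ↔ a = b) := by
  rcases eq_or_lt_of_le ha with h | h
  · subst h
    simp only [zero_mul, sub_zero, zero_sub, zero_mul, sub_self]
    constructor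
    · linarith
    · constructor
      · intro h'; linarith
      · intro h'; linarith
  · have hba : 0 < b / a := div_pos hb h
    have hlog : Real.log (b / a) = Real.log b - Real.log a := Real.log_div hb.ne' h.ne'
    have key : Real.log (b / a) ≤ b / a - 1 := Real.log_le_sub_one_of_pos hba
    have hmul : a * (Real.log b - Real.log a) ≤ b - a := by
      have h0 := mul_le_mul_of_nonneg_left key h.le
      rw [hlog] at h0
      have h3 : a * (b / a - 1) = b - a := by field_simp
      linarith
    refine ⟨by nlinarith, ?_, ?_⟩
    · intro he
      by_contra hne
      have hne' : b / a ≠ 1 := by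
        intro h1
        rw [div_eq_one_iff_eq h.ne'] at h1
        exact hne h1.symm
      have hs := Real.log_lt_sub_one_of_pos hba hne'
      rw [hlog] at hs
      have h2 := mul_lt_mul_of_pos_left hs h
      have h3 : a * (b / a - 1) = b - a := by field_simp
      nlinarith
    · intro he; subst he; ring


/-- Among densities with fixed variance `σ² > 0`, the Gaussian maximizes differential
entropy: `H(X) ≤ (1/2) log (2 π e σ²)`, with equality iff the density is Gaussian. -/
theorem gaussian_maximizes_differential_entropy
    (p : ℝ → ℝ) (hp_meas : Measurable p) (hp_nonneg : ∀ x, 0 ≤ p x)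
    (hp_int : (∫ x, p x) = 1)
    (m σ2 : ℝ) (hσ2 : 0 < σ2)
    (hmean : (∫ x, x * p x) = m)
    (hvar : (∫ x, (x - m) ^ 2 * p x) = σ2)
    (hent : Integrable (fun x => p x * Real.log (p x))) :
    (-(∫ x, p x * Real.log (p x)) ≤ (1 / 2) * Real.log (2 * π * Real.exp 1 * σ2)) ∧
    ((-(∫ x, p x * Real.log (p x)) = (1 / 2) * Real.log (2 * π * Real.exp 1 * σ2)) ↔
      p =ᵐ[volume] fun x =>
        (Real.sqrt (2 * π * σ2))⁻¹ * Real.exp (-(x - m) ^ 2 / (2 * σ2))) := by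
  have hπ : 0 < π := Real.pi_pos
  set v : NNReal := ⟨σ2, hσ2.le⟩ with hvdef
  have hv0 : v ≠ 0 := by
    intro h
    have : (v : ℝ) = 0 := by rw [h]; simp
    simp only [hvdef, NNReal.coe_mk] at this
    exact hσ2.ne' this
  set q : ℝ → ℝ := fun x =>
    (Real.sqrt (2 * π * σ2))⁻¹ * Real.exp (-(x - m) ^ 2 / (2 * σ2)) with hqdef
  have hqg : q = ProbabilityTheory.gaussianPDFReal m v := rfl
  have hq_pos : ∀ x, 0 < q x := fun x =>
    hqg ▸ ProbabilityTheory.gaussianPDFReal_pos m v x hv0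
  have hq_integrable : Integrable q :=
    hqg ▸ ProbabilityTheory.integrable_gaussianPDFReal m v
  have hq_int_one : (∫ x, q x) = 1 :=
    hqg ▸ ProbabilityTheory.integral_gaussianPDFReal_eq_one m hv0
  set c : ℝ := (Real.sqrt (2 * π * σ2))⁻¹ with hcdef
  have hsq_pos : 0 < Real.sqrt (2 * π * σ2) :=
    Real.sqrt_pos.mpr (by positivity)
  have hc_pos : 0 < c := inv_pos.mpr hsq_pos
  have hlogq : ∀ x, Real.log (q x) = Real.log c + (-(x - m) ^ 2 / (2 * σ2)) := by
    intro x
    rw [hqdef]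
    simp only
    rw [Real.log_mul hc_pos.ne' (Real.exp_pos _).ne', Real.log_exp]
  have hlogc : Real.log c = -(Real.log (2 * π * σ2) / 2) := by
    rw [hcdef, Real.log_inv, Real.log_sqrt (by positivity)]
  -- integrability facts
  have hp_integrable : Integrable p := by
    by_contra h
    rw [integral_undef h] at hp_int
    norm_num at hp_int
  have hw_integrable : Integrable (fun x => (x - m) ^ 2 * p x) := by
    by_contra h
    rw [integral_undef h] at hvar
    exact hσ2.ne' hvar.symm
  have hplq_eq : (fun x => p x * Real.log (q x))
      = fun x => Real.log c * p x - (2 * σ2)⁻¹ * ((x - m) ^ 2 * p x) := by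
    funext x
    rw [hlogq x]
    field_simp
    ring
  have hplq_integrable : Integrable (fun x => p x * Real.log (q x)) := by
    rw [hplq_eq]
    exact (hp_integrable.const_mul _).sub (hw_integrable.const_mul _)
  -- value of cross entropy
  have iC : Integrable (fun x => Real.log c * p x) := hp_integrable.const_mul _
  have iD : Integrable (fun x => (2 * σ2)⁻¹ * ((x - m) ^ 2 * p x)) :=
    hw_integrable.const_mul _
  have hI : (∫ x, p x * Real.log (q x)) = Real.log c - 1 / 2 := by
    have eC : (∫ x, Real.log c * p x) = Real.log c * ∫ x, p x := integral_const_mul _ _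
    have eD : (∫ x, (2 * σ2)⁻¹ * ((x - m) ^ 2 * p x))
        = (2 * σ2)⁻¹ * ∫ x, (x - m) ^ 2 * p x := integral_const_mul _ _
    have eS : (∫ x, (Real.log c * p x - (2 * σ2)⁻¹ * ((x - m) ^ 2 * p x)))
        = (∫ x, Real.log c * p x) - ∫ x, (2 * σ2)⁻¹ * ((x - m) ^ 2 * p x) :=
      integral_sub iC iD
    rw [hplq_eq, eS, eC, eD, hp_int, hvar]
    field_simp
  have hL : -(Real.log c - 1 / 2) = (1 / 2) * Real.log (2 * π * Real.exp 1 * σ2) := by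
    have : (2 : ℝ) * π * Real.exp 1 * σ2 = (2 * π * σ2) * Real.exp 1 := by ring
    rw [this, Real.log_mul (by positivity) (Real.exp_pos _).ne', Real.log_exp, hlogc]
    ring
  -- the nonnegative integrand
  set g : ℝ → ℝ := fun x =>
    p x * Real.log (p x) - p x * Real.log (q x) - (p x - q x) with hgdef
  have hg_nonneg : ∀ x, 0 ≤ g x := by
    intro x
    have := (gibbs_pointwise (hp_nonneg x) (hq_pos x)).1
    simp only [hgdef]
    linarith
  have hg_integrable : Integrable g :=
    (hent.sub hplq_integrable).sub (hp_integrable.sub hq_integrable)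
  have iA : Integrable (fun x => p x * Real.log (p x) - p x * Real.log (q x)) :=
    hent.sub hplq_integrable
  have iB : Integrable (fun x => p x - q x) := hp_integrable.sub hq_integrable
  have hg_int : (∫ x, g x)
      = (∫ x, p x * Real.log (p x)) + (1 / 2) * Real.log (2 * π * Real.exp 1 * σ2) := by
    have e1 : (∫ x, g x)
        = (∫ x, (p x * Real.log (p x) - p x * Real.log (q x))) - ∫ x, (p x - q x) :=
      integral_sub iA iB
    have e2 : (∫ x, (p x * Real.log (p x) - p x * Real.log (q x)))
        = (∫ x, p x * Real.log (p x)) - ∫ x, p x * Real.log (q x) :=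
      integral_sub hent hplq_integrable
    have e3 : (∫ x, (p x - q x)) = (∫ x, p x) - ∫ x, q x :=
      integral_sub hp_integrable hq_integrable
    rw [e1, e2, e3, hp_int, hq_int_one, hI, ← hL]
    ring
  have hg_nonneg_int : 0 ≤ ∫ x, g x := integral_nonneg hg_nonneg
  constructor
  · linarith [hg_int ▸ hg_nonneg_int]
  · have hzero_iff : (∫ x, g x) = 0 ↔ g =ᵐ[volume] 0 :=
      integral_eq_zero_iff_of_nonneg hg_nonneg hg_integrable
    have heq_iff : ∀ x, g x = 0 ↔ p x = q x := by
      intro x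
      obtain ⟨_, hiff⟩ := gibbs_pointwise (hp_nonneg x) (hq_pos x)
      simp only [hgdef]
      rw [sub_eq_zero]
      exact hiff
    constructor
    · intro he
      have h0 : (∫ x, g x) = 0 := by rw [hg_int]; linarith
      have := hzero_iff.mp h0
      filter_upwards [this] with x hx
      exact (heq_iff x).mp hx
    · intro he
      have hgz : g =ᵐ[volume] 0 := by
        filter_upwards [he] with x hx
        exact (heq_iff x).mpr hx
      have h0 : (∫ x, g x) = 0 := hzero_iff.mpr hgz
      rw [hg_int] at h0
      linarith
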